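/- Let σ > 0, and let s, s', w', w, t, t' be six points of ℝ² in convex position, appearing in this counterclockwise order on their convex hull. Then it is impossible that simultaneously dist(w', [s,t]) ≤ σ, dist(w, [s,t]) > σ, dist(w, [s',t']) ≤ σ, and dist(w', [s',t']) > σ, where [a,b] denotes the closed line segment from a to b and dist denotes Euclidean distance from a point to a set. -/

import Mathlib

/-!
STATEMENT 13: Let σ > 0, and let s, s', w', w, t, t' be six points of ℝ² in
convex position, appearing in this counterclockwise order on their convex hull.
Then it is impossible that simultaneously dist(w', [s,t]) ≤ σ,
dist(w, [s,t]) > σ, dist(w, [s',t']) ≤ σ, and dist(w', [s',t']) > σ.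

The hypothesis "in convex position, in this counterclockwise order" is expressed
by requiring every triple of the six points, taken in the listed order, to be
positively oriented.
-/

noncomputable section

abbrev Pt := EuclideanSpace ℝ (Fin 2)

/-- `ccw3 a b c` : the triple `(a, b, c)` is positively (counterclockwise) oriented. -/
def ccw3 (a b c : Pt) : Prop :=
  0 < (b 0 - a 0) * (c 1 - a 1) - (b 1 - a 1) * (c 0 - a 0)

/-- The (doubled, signed) area determinant of a triple of points. -/
def det3 (a b c : Pt) : ℝ :=
  (b 0 - a 0) * (c 1 - a 1) - (b 1 - a 1) * (c 0 - a 0)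

lemma comb_apply (u v : ℝ) (x y : Pt) (i : Fin 2) :
    (u • x + v • y) i = u * x i + v * y i := by
  simp [PiLp.add_apply, PiLp.smul_apply, smul_eq_mul]

lemma det3_self (a b : Pt) : det3 a b b = 0 := by unfold det3; ring

lemma det3_self2 (a b : Pt) : det3 a b a = 0 := by unfold det3; ring

lemma det3_comb2 {u v : ℝ} (h : u + v = 1) (p x y q : Pt) :
    det3 p (u • x + v • y) q = u * det3 p x q + v * det3 p y q := by
  obtain rfl : v = 1 - u := by linarith
  simp only [det3, comb_apply]; ring

lemma det3_comb3 {u v : ℝ} (h : u + v = 1) (p q x y : Pt) :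
    det3 p q (u • x + v • y) = u * det3 p q x + v * det3 p q y := by
  obtain rfl : v = 1 - u := by linarith
  simp only [det3, comb_apply]; ring

lemma pt_ext {x y : Pt} (h0 : x 0 = y 0) (h1 : x 1 = y 1) : x = y := by
  ext i
  fin_cases i <;> assumption

lemma isCompact_seg (x y : Pt) : IsCompact (segment ℝ x y) := by
  rw [segment_eq_image]
  exact isCompact_Icc.image (by fun_prop)

lemma dist_left_le_of_mem_segment {x y z : Pt} (h : z ∈ segment ℝ x y) :
    dist x z ≤ dist x y := by
  obtain ⟨u, v, hu, hv, huv, rfl⟩ := h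
  obtain rfl : u = 1 - v := by linarith
  have hz : (1 - v) • x + v • y - x = v • (y - x) := by module
  have hv1 : v ≤ 1 := by linarith
  rw [dist_eq_norm', dist_eq_norm']
  rw [show (1 - v) • x + v • y - x = v • (y - x) from hz, norm_smul]
  simp only [Real.norm_eq_abs, abs_of_nonneg hv]
  nlinarith [norm_nonneg (y - x)]

lemma combo_neg {p q x y : ℝ} (hp : 0 ≤ p) (hq : 0 ≤ q) (hpq : p + q = 1)
    (hx : x < 0) (hy : y < 0) : p * x + q * y < 0 := by
  rcases hp.lt_or_eq with h | h
  · nlinarith [mul_nonneg hq (neg_nonneg.2 hy.le), mul_pos h (neg_pos.2 hx)]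
  · have hq1 : q = 1 := by linarith
    rw [← h, hq1]; nlinarith

/-- Crossing lemma: under suitable orientation sign conditions the segments
`[p,q]` and `[r,u]` intersect. -/
lemma seg_int {p q r u : Pt} (h1 : det3 r u p < 0) (h2 : 0 ≤ det3 r u q)
    (h3 : 0 ≤ det3 p q r) (h4 : det3 p q u ≤ 0) :
    ∃ z, z ∈ segment ℝ p q ∧ z ∈ segment ℝ r u := by
  set A := det3 r u p with hA
  set B := det3 r u q with hB
  set C := det3 p q r with hC
  set E := det3 p q u with hE
  have hden : C - E = B - A := by
    simp only [hA, hB, hC, hE, det3]; ring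
  have hd : 0 < B - A := by linarith
  set lam := -A / (B - A) with hlam
  set tt := C / (B - A) with htt
  have hlam0 : 0 ≤ lam := div_nonneg (by linarith) hd.le
  have hlam1 : lam ≤ 1 := by
    rw [hlam, div_le_one hd]; linarith
  have htt0 : 0 ≤ tt := div_nonneg h3 hd.le
  have htt1 : tt ≤ 1 := by
    rw [htt, div_le_one hd]; linarith
  refine ⟨(1 - lam) • p + lam • q, ⟨1 - lam, lam, by linarith, hlam0, by ring, rfl⟩, ?_⟩
  refine ⟨1 - tt, tt, by linarith, htt0, by ring, ?_⟩
  apply pt_ext <;>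
  · simp only [comb_apply]
    rw [hlam, htt]
    have hA' : A = det3 r u p := rfl
    have hB' : B = det3 r u q := rfl
    have hC' : C = det3 p q r := rfl
    field_simp
    simp only [hA', hB', hC', det3]
    ring


lemma nonneg_of_mul_pos_left {A X : ℝ} (hA : 0 < A) (h : 0 ≤ A * X) : 0 ≤ X := by
  by_contra hX
  push_neg at hX
  nlinarith [mul_pos hA (neg_pos.2 hX)]

lemma nonpos_of_mul_pos_left {A X : ℝ} (hA : 0 < A) (h : A * X ≤ 0) : X ≤ 0 := by
  by_contra hX
  push_neg at hX
  nlinarith [mul_pos hA hX]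

lemma combo_nonpos {p q x y : ℝ} (hp : 0 ≤ p) (hq : 0 ≤ q) (hx : x ≤ 0) (hy : y ≤ 0) :
    p * x + q * y ≤ 0 := by
  nlinarith [mul_nonneg hp (neg_nonneg.2 hx), mul_nonneg hq (neg_nonneg.2 hy)]

lemma combo_nonneg' {p q x y : ℝ} (hp : 0 ≤ p) (hq : 0 ≤ q) (hx : 0 ≤ x) (hy : 0 ≤ y) :
    0 ≤ p * x + q * y :=
  add_nonneg (mul_nonneg hp hx) (mul_nonneg hq hy)

lemma mul_np {x y : ℝ} (hx : x ≤ 0) (hy : 0 ≤ y) : x * y ≤ 0 := by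
  nlinarith [mul_nonneg (neg_nonneg.2 hx) hy]

lemma zero_cross {A0 A1 e2 : ℝ} (h : (1 - e2) * A0 + e2 * A1 = 0) (hA0 : A0 < 0)
    (hA1 : 0 < A1) (he2 : 0 ≤ e2) : 0 < e2 := by nlinarith

lemma cross_mono {A0 A1 u2 e2 : ℝ} (hu : (1 - u2) * A0 + u2 * A1 < 0)
    (he : (1 - e2) * A0 + e2 * A1 = 0) (hA0 : A0 < 0) (hA1 : 0 < A1) : u2 ≤ e2 := by
  nlinarith

lemma corner3_nonneg {k m v1 v2 v4 : ℝ} (hk0 : 0 ≤ k) (hk1 : k ≤ 1) (hm0 : 0 ≤ m)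
    (hm1 : m ≤ 1) (h1 : 0 ≤ v1) (h2 : 0 ≤ v2) (h4 : 0 ≤ v4) :
    0 ≤ (1 - k) * (m * v1 + (1 - m) * v2) + k * (m * 0 + (1 - m) * v4) := by
  nlinarith [mul_nonneg (mul_nonneg (by linarith : (0:ℝ) ≤ 1 - k) hm0) h1,
    mul_nonneg (mul_nonneg (by linarith : (0:ℝ) ≤ 1 - k) (by linarith : (0:ℝ) ≤ 1 - m)) h2,
    mul_nonneg (mul_nonneg hk0 (by linarith : (0:ℝ) ≤ 1 - m)) h4]

lemma corner3_nonpos {k m x1 x2 x3 : ℝ} (hk0 : 0 ≤ k) (hk1 : k ≤ 1) (hm0 : 0 ≤ m)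
    (hm1 : m ≤ 1) (h1 : x1 ≤ 0) (h2 : x2 ≤ 0) (h3 : x3 ≤ 0) :
    m * ((1 - k) * x1 + k * 0) + (1 - m) * ((1 - k) * x2 + k * x3) ≤ 0 := by
  nlinarith [mul_nonneg (mul_nonneg hm0 (by linarith : (0:ℝ) ≤ 1 - k)) (neg_nonneg.2 h1),
    mul_nonneg (mul_nonneg (by linarith : (0:ℝ) ≤ 1 - m) (by linarith : (0:ℝ) ≤ 1 - k))
      (neg_nonneg.2 h2),
    mul_nonneg (mul_nonneg (by linarith : (0:ℝ) ≤ 1 - m) hk0) (neg_nonneg.2 h3)]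

set_option maxHeartbeats 2000000 in
theorem base_order (σ : ℝ) (hσ : 0 < σ) (s s' w' w t t' : Pt)
    (hconv : ∀ i j l : Fin 6, i < j → j < l →
      ccw3 (![s, s', w', w, t, t'] i) (![s, s', w', w, t, t'] j)
        (![s, s', w', w, t, t'] l)) :
    ¬ (Metric.infDist w' (segment ℝ s t) ≤ σ ∧
       σ < Metric.infDist w (segment ℝ s t) ∧
       Metric.infDist w (segment ℝ s' t') ≤ σ ∧
       σ < Metric.infDist w' (segment ℝ s' t')) := by
  rintro ⟨h1, h2, h3, h4⟩
  have C012 : 0 < det3 s s' w' := hconv 0 1 2 (by decide) (by decide)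
  have C013 : 0 < det3 s s' w := hconv 0 1 3 (by decide) (by decide)
  have C014 : 0 < det3 s s' t := hconv 0 1 4 (by decide) (by decide)
  have C015 : 0 < det3 s s' t' := hconv 0 1 5 (by decide) (by decide)
  have C023 : 0 < det3 s w' w := hconv 0 2 3 (by decide) (by decide)
  have C024 : 0 < det3 s w' t := hconv 0 2 4 (by decide) (by decide)
  have C025 : 0 < det3 s w' t' := hconv 0 2 5 (by decide) (by decide)
  have C034 : 0 < det3 s w t := hconv 0 3 4 (by decide) (by decide)
  have C035 : 0 < det3 s w t' := hconv 0 3 5 (by decide) (by decide)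
  have C045 : 0 < det3 s t t' := hconv 0 4 5 (by decide) (by decide)
  have C123 : 0 < det3 s' w' w := hconv 1 2 3 (by decide) (by decide)
  have C124 : 0 < det3 s' w' t := hconv 1 2 4 (by decide) (by decide)
  have C125 : 0 < det3 s' w' t' := hconv 1 2 5 (by decide) (by decide)
  have C134 : 0 < det3 s' w t := hconv 1 3 4 (by decide) (by decide)
  have C135 : 0 < det3 s' w t' := hconv 1 3 5 (by decide) (by decide)
  have C145 : 0 < det3 s' t t' := hconv 1 4 5 (by decide) (by decide)
  have C234 : 0 < det3 w' w t := hconv 2 3 4 (by decide) (by decide)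
  have C235 : 0 < det3 w' w t' := hconv 2 3 5 (by decide) (by decide)
  have C245 : 0 < det3 w' t t' := hconv 2 4 5 (by decide) (by decide)
  have C345 : 0 < det3 w t t' := hconv 3 4 5 (by decide) (by decide)
  -- nearest points on the two segments
  obtain ⟨a, haseg, hda⟩ :=
    (isCompact_seg s t).exists_infDist_eq_dist ⟨s, left_mem_segment ℝ s t⟩ w'
  obtain ⟨b, hbseg, hdb⟩ :=
    (isCompact_seg s' t').exists_infDist_eq_dist ⟨s', left_mem_segment ℝ s' t'⟩ w
  have hwa : dist w' a ≤ σ := by rw [← hda]; exact h1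
  have hwb : dist w b ≤ σ := by rw [← hdb]; exact h3
  have haseg' := haseg
  have hbseg' := hbseg
  obtain ⟨p1, p2, hp1, hp2, hp12, hae⟩ := haseg
  obtain rfl : p2 = 1 - p1 := by linarith
  obtain ⟨u1, u2, hu1, hu2, hu12, hbe⟩ := hbseg
  obtain rfl : u1 = 1 - u2 := by linarith
  -- frequently used sign facts
  have nA0 : det3 s t s' < 0 := by
    have e : det3 s t s' = -det3 s s' t := by unfold det3; ring
    linarith
  have nB0 : det3 w s' s < 0 := by
    have e : det3 w s' s = -det3 s s' w := by unfold det3; ring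
    linarith
  have pB1 : 0 < det3 w t' s := by
    have e : det3 w t' s = det3 s w t' := by unfold det3; ring
    linarith
  have nWST : det3 w s' t < 0 := by
    have e : det3 w s' t = -det3 s' w t := by unfold det3; ring
    linarith
  have nWTT : det3 w t' t < 0 := by
    have e : det3 w t' t = -det3 w t t' := by unfold det3; ring
    linarith
  have nSTW : det3 s t w < 0 := by
    have e : det3 s t w = -det3 s w t := by unfold det3; ring
    linarith
  have pP0 : 0 < det3 s' t' s := by
    have e : det3 s' t' s = det3 s s' t' := by unfold det3; ring
    linarith
  have nP1 : det3 s' t' t < 0 := by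
    have e : det3 s' t' t = -det3 s' t t' := by unfold det3; ring
    linarith
  have nQ0 : det3 w' s t' < 0 := by
    have e : det3 w' s t' = -det3 s w' t' := by unfold det3; ring
    linarith
  have pW'SS' : 0 < det3 w' s s' := by
    have e : det3 w' s s' = det3 s s' w' := by unfold det3; ring
    linarith
  have pW'TS' : 0 < det3 w' t s' := by
    have e : det3 w' t s' = det3 s' w' t := by unfold det3; ring
    linarith
  have nS'T'W' : det3 s' t' w' < 0 := by
    have e : det3 s' t' w' = -det3 s' w' t' := by unfold det3; ring
    linarith
  -- affine expansions at a and b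
  have estb : det3 s t b = (1 - u2) * det3 s t s' + u2 * det3 s t t' := by
    rw [← hbe]; exact det3_comb3 (by ring) s t s' t'
  have esta : det3 s' t' a = p1 * det3 s' t' s + (1 - p1) * det3 s' t' t := by
    rw [← hae]; exact det3_comb3 (by ring) s' t' s t
  rcases le_or_gt 0 (det3 s t b) with hcase1 | hcase1
  · -- Case 1 : b is on the far side of line st; segment [w,b] crosses [s,t]
    have ewbs : det3 w b s = (1 - u2) * det3 w s' s + u2 * det3 w t' s := by
      rw [← hbe]; exact det3_comb2 (by ring) w s' t' s
    have ewbt : det3 w b t = (1 - u2) * det3 w s' t + u2 * det3 w t' t := by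
      rw [← hbe]; exact det3_comb2 (by ring) w s' t' t
    have hkey : det3 s t t' * det3 w s' s - det3 s t s' * det3 w t' s
        = det3 s s' t' * det3 s w t := by unfold det3; ring
    have hwbs : 0 ≤ det3 w b s := by
      have hmain : 0 ≤ det3 s t t' * det3 w b s := by
        have e2 : det3 s t t' * det3 w b s
            = (1 - u2) * (det3 s t t' * det3 w s' s - det3 s t s' * det3 w t' s)
              + det3 w t' s * det3 s t b := by rw [ewbs, estb]; ring
        rw [e2, hkey]
        have t1 : 0 ≤ (1 - u2) * (det3 s s' t' * det3 s w t) :=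
          mul_nonneg (by linarith) (mul_pos C015 C034).le
        have t2 : 0 ≤ det3 w t' s * det3 s t b := mul_nonneg pB1.le hcase1
        linarith
      exact nonneg_of_mul_pos_left C045 hmain
    have hwbt : det3 w b t ≤ 0 := by
      rw [ewbt]
      exact combo_nonpos hu1 hu2 nWST.le nWTT.le
    obtain ⟨z, hz1, hz2⟩ := seg_int nSTW hcase1 hwbs hwbt
    have d1 : σ < dist w z := lt_of_lt_of_le h2 (Metric.infDist_le_dist_of_mem hz2)
    have d2 : dist w z ≤ dist w b := dist_left_le_of_mem_segment hz1
    linarith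
  rcases le_or_gt 0 (det3 s' t' a) with hcase2 | hcase2
  · -- Case 2 : a is on the far side of line s't'; segment [w',a] crosses [s',t']
    have ewat : det3 w' a t' = p1 * det3 w' s t' + (1 - p1) * det3 w' t t' := by
      rw [← hae]; exact det3_comb2 (by ring) w' s t t'
    have ewas : det3 w' a s' = p1 * det3 w' s s' + (1 - p1) * det3 w' t s' := by
      rw [← hae]; exact det3_comb2 (by ring) w' s t s'
    have hkey2 : det3 s' t' t * det3 w' s t' - det3 s' t' s * det3 w' t t'
        = det3 s t t' * det3 s' w' t' := by unfold det3; ring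
    have hwat : det3 w' a t' ≤ 0 := by
      have hmain : det3 s' t' s * det3 w' a t' ≤ 0 := by
        have e2 : det3 s' t' s * det3 w' a t'
            = -(1 - p1) * (det3 s' t' t * det3 w' s t' - det3 s' t' s * det3 w' t t')
              + det3 w' s t' * det3 s' t' a := by rw [ewat, esta]; ring
        rw [e2, hkey2]
        have t1 : -(1 - p1) * (det3 s t t' * det3 s' w' t') ≤ 0 := by
          rw [neg_mul]
          exact neg_nonpos_of_nonneg (mul_nonneg hp2 (mul_pos C045 C125).le)
        have t2 : det3 w' s t' * det3 s' t' a ≤ 0 := mul_np nQ0.le hcase2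
        linarith
      exact nonpos_of_mul_pos_left pP0 hmain
    have hwas : 0 ≤ det3 w' a s' := by
      rw [ewas]
      exact combo_nonneg' hp1 hp2 pW'SS'.le pW'TS'.le
    obtain ⟨z, hz1, hz2⟩ := seg_int nS'T'W' hcase2 hwas hwat
    have d1 : σ < dist w' z := lt_of_lt_of_le h4 (Metric.infDist_le_dist_of_mem hz2)
    have d2 : dist w' z ≤ dist w' a := dist_left_le_of_mem_segment hz1
    linarith
  · -- Case 3 : a is past the crossing point X, b is before it; [w,b] crosses [w',a]
    have pTSS : 0 ≤ det3 t s s' := by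
      have e : det3 t s s' = det3 s s' t := by unfold det3; ring
      linarith
    have nTST : det3 t s t' ≤ 0 := by
      have e : det3 t s t' = -det3 s t t' := by unfold det3; ring
      linarith
    obtain ⟨X, hX1, hX2⟩ := seg_int nP1 pP0.le pTSS nTST
    obtain ⟨c1, c2, hc1, hc2, hc12, hXe⟩ := hX1
    obtain rfl : c1 = 1 - c2 := by linarith
    obtain ⟨e1, e2, he1, he2, he12, hXE⟩ := hX2
    obtain rfl : e1 = 1 - e2 := by linarith
    -- X is on both lines
    have hstX : (1 - e2) * det3 s t s' + e2 * det3 s t t' = 0 := by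
      have e : det3 s t X = (1 - e2) * det3 s t s' + e2 * det3 s t t' := by
        rw [← hXE]; exact det3_comb3 (by ring) s t s' t'
      have e' : det3 s t X = (1 - c2) * det3 s t t + c2 * det3 s t s := by
        rw [← hXe]; exact det3_comb3 (by ring) s t t s
      have z1 : det3 s t t = 0 := det3_self s t
      have z2 : det3 s t s = 0 := det3_self2 s t
      rw [z1, z2, mul_zero, mul_zero, add_zero] at e'
      linarith
    have hsptpX : (1 - c2) * det3 s' t' t + c2 * det3 s' t' s = 0 := by
      have e : det3 s' t' X = (1 - c2) * det3 s' t' t + c2 * det3 s' t' s := by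
        rw [← hXe]; exact det3_comb3 (by ring) s' t' t s
      have e' : det3 s' t' X = (1 - e2) * det3 s' t' s' + e2 * det3 s' t' t' := by
        rw [← hXE]; exact det3_comb3 (by ring) s' t' s' t'
      have z1 : det3 s' t' s' = 0 := det3_self2 s' t'
      have z2 : det3 s' t' t' = 0 := det3_self s' t'
      rw [z1, z2, mul_zero, mul_zero, add_zero] at e'
      linarith
    have he2pos : 0 < e2 := zero_cross hstX nA0 C045 he2
    have hc2pos : 0 < c2 := zero_cross hsptpX nP1 pP0 hc2
    have hu2e2 : u2 ≤ e2 :=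
      cross_mono (by linarith : (1 - u2) * det3 s t s' + u2 * det3 s t t' < 0)
        hstX nA0 C045
    have hp1c2 : p1 ≤ c2 :=
      cross_mono (by linarith : (1 - p1) * det3 s' t' t + p1 * det3 s' t' s < 0)
        hsptpX nP1 pP0
    have hbX : (1 - u2 / e2) • s' + (u2 / e2) • X = b := by
      rw [← hXE, ← hbe]
      match_scalars <;> field_simp <;> ring
    have haX : (p1 / c2) • X + (1 - p1 / c2) • t = a := by
      rw [← hXe, ← hae]
      match_scalars <;> field_simp <;> ring
    have hk0 : 0 ≤ u2 / e2 := div_nonneg hu2 he2pos.le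
    have hk1 : u2 / e2 ≤ 1 := (div_le_one he2pos).2 hu2e2
    have hm0 : 0 ≤ p1 / c2 := div_nonneg hp1 hc2pos.le
    have hm1 : p1 / c2 ≤ 1 := (div_le_one hc2pos).2 hp1c2
    -- corner values
    have cw'Xs' : 0 ≤ det3 w' X s' := by
      have e : det3 w' X s' = (1 - e2) * det3 w' s' s' + e2 * det3 w' t' s' := by
        rw [← hXE]; exact det3_comb2 (by ring) w' s' t' s'
      have z : det3 w' s' s' = 0 := det3_self w' s'
      have pv : 0 < det3 w' t' s' := by
        have e2' : det3 w' t' s' = det3 s' w' t' := by unfold det3; ring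
        linarith
      rw [e, z, mul_zero, zero_add]
      exact mul_nonneg he2 pv.le
    have cw'tX : 0 ≤ det3 w' t X := by
      have e : det3 w' t X = (1 - c2) * det3 w' t t + c2 * det3 w' t s := by
        rw [← hXe]; exact det3_comb3 (by ring) w' t t s
      have z : det3 w' t t = 0 := det3_self w' t
      have pv : 0 < det3 w' t s := by
        have e2' : det3 w' t s = det3 s w' t := by unfold det3; ring
        linarith
      rw [e, z, mul_zero, zero_add]
      exact mul_nonneg hc2 pv.le
    have ew'ab : det3 w' a b
        = (1 - u2 / e2) * det3 w' a s' + (u2 / e2) * det3 w' a X := by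
      rw [← hbX]; exact det3_comb3 (by ring) w' a s' X
    have ew'as' : det3 w' a s'
        = (p1 / c2) * det3 w' X s' + (1 - p1 / c2) * det3 w' t s' := by
      rw [← haX]; exact det3_comb2 (by ring) w' X t s'
    have ew'aX : det3 w' a X
        = (p1 / c2) * det3 w' X X + (1 - p1 / c2) * det3 w' t X := by
      rw [← haX]; exact det3_comb2 (by ring) w' X t X
    have hwab : 0 ≤ det3 w' a b := by
      have z : det3 w' X X = 0 := det3_self w' X
      rw [ew'ab, ew'as', ew'aX, z]
      exact corner3_nonneg hk0 hk1 hm0 hm1 cw'Xs' pW'TS'.le cw'tX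
    have cwsX : det3 w s' X ≤ 0 := by
      have e : det3 w s' X = (1 - c2) * det3 w s' t + c2 * det3 w s' s := by
        rw [← hXe]; exact det3_comb3 (by ring) w s' t s
      rw [e]
      exact combo_nonpos hc1 hc2 nWST.le nB0.le
    have cwXt : det3 w X t ≤ 0 := by
      have e : det3 w X t = (1 - e2) * det3 w s' t + e2 * det3 w t' t := by
        rw [← hXE]; exact det3_comb2 (by ring) w s' t' t
      rw [e]
      exact combo_nonpos he1 he2 nWST.le nWTT.le
    have ewba : det3 w b a
        = (p1 / c2) * det3 w b X + (1 - p1 / c2) * det3 w b t := by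
      rw [← haX]; exact det3_comb3 (by ring) w b X t
    have ewbX : det3 w b X
        = (1 - u2 / e2) * det3 w s' X + (u2 / e2) * det3 w X X := by
      rw [← hbX]; exact det3_comb2 (by ring) w s' X X
    have ewbt : det3 w b t
        = (1 - u2 / e2) * det3 w s' t + (u2 / e2) * det3 w X t := by
      rw [← hbX]; exact det3_comb2 (by ring) w s' X t
    have hwba : det3 w b a ≤ 0 := by
      have z : det3 w X X = 0 := det3_self w X
      rw [ewba, ewbX, ewbt, z]
      exact corner3_nonpos hk0 hk1 hm0 hm1 cwsX nWST.le cwXt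
    have nw'aw : det3 w' a w < 0 := by
      have e : det3 w' a w = p1 * det3 w' s w + (1 - p1) * det3 w' t w := by
        rw [← hae]; exact det3_comb2 (by ring) w' s t w
      have n1 : det3 w' s w < 0 := by
        have e' : det3 w' s w = -det3 s w' w := by unfold det3; ring
        linarith
      have n2 : det3 w' t w < 0 := by
        have e' : det3 w' t w = -det3 w' w t := by unfold det3; ring
        linarith
      rw [e]; exact combo_neg hp1 (by linarith) (by ring) n1 n2
    have pwbw : 0 ≤ det3 w b w' := by
      have e : det3 w b w' = (1 - u2) * det3 w s' w' + u2 * det3 w t' w' := by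
        rw [← hbe]; exact det3_comb2 (by ring) w s' t' w'
      have p1' : 0 < det3 w s' w' := by
        have e' : det3 w s' w' = det3 s' w' w := by unfold det3; ring
        linarith
      have p2' : 0 < det3 w t' w' := by
        have e' : det3 w t' w' = det3 w' w t' := by unfold det3; ring
        linarith
      rw [e]
      exact combo_nonneg' hu1 hu2 p1'.le p2'.le
    obtain ⟨z, hz1, hz2⟩ := seg_int nw'aw hwab pwbw hwba
    have dwa : σ < dist w a := lt_of_lt_of_le h2 (Metric.infDist_le_dist_of_mem haseg')
    have dwb : σ < dist w' b := lt_of_lt_of_le h4 (Metric.infDist_le_dist_of_mem hbseg')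
    have s1 : dist w z + dist z b = dist w b := dist_add_dist_of_mem_segment hz1
    have s2 : dist w' z + dist z a = dist w' a := dist_add_dist_of_mem_segment hz2
    have tr1 : dist w a ≤ dist w z + dist z a := dist_triangle w z a
    have tr2 : dist w' b ≤ dist w' z + dist z b := dist_triangle w' z b
    linarith
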